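/- Alexandrov's lemma: let p, x, y, z and p', x', y', z' be points in the Euclidean plane such that |p−x|=|p'−x'|, |x−y|=|x'−y'|, |y−z|=|y'−z'|, |z−p|=|z'−p'|, and y' lies on the line segment [x', z']. Then |p−y| ≥ |p'−y'| if and only if the angle ∠(y; p, x) + ∠(y; p, z) ≤ π, and |p−y| ≤ |p'−y'| if and only if ∠(y; p, x) + ∠(y; p, z) ≥ π. -/

import Mathlib

open EuclideanGeometry

private lemma alex_aux {a b t t' cA cB A B : ℝ} (ha : 0 < a) (hb : 0 < b)
    (ht : 0 < t) (ht' : 0 ≤ t')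
    (hA : A ∈ Set.Icc 0 Real.pi) (hB : B ∈ Set.Icc 0 Real.pi)
    (hcA : cA = Real.cos A) (hcB : cB = Real.cos B)
    (key : 2 * t * a * b * (cA + cB) = (a + b) * (t ^ 2 - t' ^ 2)) :
    (t' ≤ t ↔ A + B ≤ Real.pi) ∧ (t ≤ t' ↔ Real.pi ≤ A + B) := by
  have h2ab : (0:ℝ) < 2 * t * a * b := by positivity
  have hπA : Real.pi - A ∈ Set.Icc 0 Real.pi := ⟨by linarith [hA.2], by linarith [hA.1]⟩
  have hiff1 : Real.cos (Real.pi - A) ≤ Real.cos B ↔ B ≤ Real.pi - A :=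
    Real.strictAntiOn_cos.le_iff_ge hπA hB
  have hiff2 : Real.cos B ≤ Real.cos (Real.pi - A) ↔ Real.pi - A ≤ B :=
    Real.strictAntiOn_cos.le_iff_ge hB hπA
  rw [Real.cos_pi_sub, ← hcA, ← hcB] at hiff1 hiff2
  constructor
  · constructor
    · intro h
      have hsq : t' ^ 2 ≤ t ^ 2 := by nlinarith
      have hcos : 0 ≤ cA + cB := by
        by_contra hneg
        push_neg at hneg
        nlinarith [mul_pos h2ab (neg_pos.2 hneg)]
      linarith [hiff1.1 (by linarith)]
    · intro h
      have hcos : 0 ≤ cA + cB := by linarith [hiff1.2 (by linarith)]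
      have hsq : t' ^ 2 ≤ t ^ 2 := by nlinarith [mul_nonneg h2ab.le hcos]
      nlinarith
  · constructor
    · intro h
      have hsq : t ^ 2 ≤ t' ^ 2 := by nlinarith
      have hcos : cA + cB ≤ 0 := by
        by_contra hneg
        push_neg at hneg
        nlinarith [mul_pos h2ab hneg]
      linarith [hiff2.1 (by linarith)]
    · intro h
      have hcos : cA + cB ≤ 0 := by linarith [hiff2.2 (by linarith)]
      have hsq : t ^ 2 ≤ t' ^ 2 := by nlinarith [mul_nonneg h2ab.le (neg_nonneg.2 hcos)]
      nlinarith

/-- Alexandrov's lemma: given two quadrilaterals `p x y z` and `p' x' y' z'` in the plane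
with equal corresponding sides, where `y'` lies on the segment `[x', z']`, the comparison
`|p - y| ≥ |p' - y'|` holds iff `∠(y; p, x) + ∠(y; p, z) ≤ π`, and
`|p - y| ≤ |p' - y'|` holds iff `∠(y; p, x) + ∠(y; p, z) ≥ π`. -/
theorem alexandrov_lemma
    (p x y z p' x' y' z' : EuclideanSpace ℝ (Fin 2))
    (h₁ : dist p x = dist p' x') (h₂ : dist x y = dist x' y')
    (h₃ : dist y z = dist y' z') (h₄ : dist z p = dist z' p')
    (hy' : y' ∈ segment ℝ x' z')
    (hp : p ≠ y) (hx : x ≠ y) (hz : z ≠ y) :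
    (dist p' y' ≤ dist p y ↔ ∠ p y x + ∠ p y z ≤ Real.pi) ∧
    (dist p y ≤ dist p' y' ↔ Real.pi ≤ ∠ p y x + ∠ p y z) := by
  have hA : 0 < dist x y := dist_pos.2 hx
  have hB : 0 < dist y z := dist_pos.2 (fun h => hz h.symm)
  have hT : 0 < dist p y := dist_pos.2 hp
  -- law of cosines, unprimed side
  have eqc : dist p x ^ 2 = dist p y ^ 2 + dist x y ^ 2
      - 2 * dist p y * dist x y * Real.cos (∠ p y x) := by
    linear_combination law_cos p y x
  have eqd : dist z p ^ 2 = dist y z ^ 2 + dist p y ^ 2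
      - 2 * dist y z * dist p y * Real.cos (∠ p y z) := by
    have h := law_cos z y p
    rw [show ∠ z y p = ∠ p y z from angle_comm z y p, dist_comm z y] at h
    linear_combination h
  -- Stewart-type identity at `y'`
  have K : dist y z * dist p x ^ 2 + dist x y * dist z p ^ 2
      = (dist x y + dist y z) * (dist p' y' ^ 2 + dist x y * dist y z) := by
    rw [h₁, h₂, h₃, h₄]
    by_cases hpy' : p' = y'
    · rw [hpy', dist_comm y' x', dist_comm z' y', dist_self]
      ring
    · have hyx' : y' ≠ x' := by
        intro h; apply hA.ne'; rw [h₂, h, dist_self]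
      have hyz' : y' ≠ z' := by
        intro h; apply hB.ne'; rw [h₃, h, dist_self]
      have hsb : Sbtw ℝ x' y' z' := ⟨mem_segment_iff_wbtw.1 hy', hyx', hyz'⟩
      have hπ : ∠ x' y' z' = Real.pi := angle_eq_pi_iff_sbtw.2 hsb
      have hsum : ∠ p' y' x' + ∠ p' y' z' = Real.pi :=
        angle_add_angle_eq_pi_of_angle_eq_pi p' hπ
      have eqc' : dist p' x' ^ 2 = dist p' y' ^ 2 + dist x' y' ^ 2
          - 2 * dist p' y' * dist x' y' * Real.cos (∠ p' y' x') := by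
        linear_combination law_cos p' y' x'
      have eqd' : dist z' p' ^ 2 = dist y' z' ^ 2 + dist p' y' ^ 2
          - 2 * dist y' z' * dist p' y' * Real.cos (∠ z' y' p') := by
        have h := law_cos z' y' p'
        rw [dist_comm z' y'] at h
        linear_combination h
      have hcos : Real.cos (∠ z' y' p') = - Real.cos (∠ p' y' x') := by
        rw [show ∠ z' y' p' = ∠ p' y' z' from angle_comm z' y' p',
          show ∠ p' y' z' = Real.pi - ∠ p' y' x' from by linarith, Real.cos_pi_sub]
      rw [hcos] at eqd'
      linear_combination dist y' z' * eqc' + dist x' y' * eqd'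
  have key : 2 * dist p y * dist x y * dist y z * (Real.cos (∠ p y x) + Real.cos (∠ p y z))
      = (dist x y + dist y z) * (dist p y ^ 2 - dist p' y' ^ 2) := by
    linear_combination dist y z * eqc + dist x y * eqd - K
  exact alex_aux hA hB hT dist_nonneg ⟨angle_nonneg _ _ _, angle_le_pi _ _ _⟩
    ⟨angle_nonneg _ _ _, angle_le_pi _ _ _⟩ rfl rfl key
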